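/- With W = ΠV and η : T(V) → T(W) the standard isomorphism, let δ_k : W^{⊗k} → W be a homogeneous map, μ_k = η₁⁻¹∘δ_k∘η_k, δ̂_k the Z/2-coderivation extension of δ_k on T(W), and μ̂_k the (Z/2×Z)-coderivation extension of μ_k on T(V). Then η⁻¹∘δ̂_k∘η applied to v₁⊗···⊗v_n equals (-1)^{(n-k)|μ_k|} μ̂_k(v₁⊗···⊗v_n); in particular |μ_k| = |δ_k| + (k-1) mod 2. -/

import Mathlib

open scoped TensorProduct

/-- `(-1)^a` for `a : ZMod 2`. -/
def pSign (k : Type*) [CommRing k] (a : ZMod 2) : k := (-1 : k) ^ a.val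

/-- The reduced tensor coalgebra `T(V) = ⊕_{n ≥ 1} V^{⊗ n}` (degree `n+1` in slot `n`). -/
abbrev TCoalg (k V : Type*) [CommRing k] [AddCommGroup V] [Module k V] :=
  DirectSum ℕ (fun n => ⨂[k] (_ : Fin (n + 1)), V)

/-- The pure tensor `v₁ ⊗ ⋯ ⊗ v_{n+1}` as an element of `T(V)`. -/
noncomputable def elt (k : Type*) [CommRing k] {V : Type*} [AddCommGroup V] [Module k V]
    (n : ℕ) (v : Fin (n + 1) → V) : TCoalg k V :=
  DirectSum.lof k ℕ (fun m => ⨂[k] (_ : Fin (m + 1)), V) n (PiTensorProduct.tprod k v)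

lemma pSign_add {k : Type*} [CommRing k] (a b : ZMod 2) :
    pSign k (a + b) = pSign k a * pSign k b := by
  have h : ∀ x : ZMod 2, x = 0 ∨ x = 1 := by decide
  rcases h a with ha | ha <;> rcases h b with hb | hb <;> subst ha <;> subst hb <;>
    simp [pSign, show ((1 : ZMod 2) + 1) = 0 from rfl,
      show ZMod.val (1 : ZMod 2) = 1 from rfl]

lemma pSign_congr {k : Type*} [CommRing k] {a b : ZMod 2} (h : a = b) :
    pSign k a = pSign k b := by rw [h]

lemma sum_if_lt {M : Type*} [AddCommMonoid M] {N i : ℕ} (h : i ≤ N) (f : ℕ → M) :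
    ∑ j ∈ Finset.range N, (if j < i then f j else 0) = ∑ j ∈ Finset.range i, f j := by
  have h2 : ∑ j ∈ Finset.Ico i N, (if j < i then f j else 0) = 0 :=
    Finset.sum_eq_zero fun j hj => if_neg (by have := (Finset.mem_Ico.1 hj).1; omega)
  rw [← Finset.sum_range_add_sum_Ico _ h, h2, add_zero]
  exact Finset.sum_congr rfl fun j hj => if_pos (Finset.mem_range.1 hj)

lemma fin_sum_ext {M : Type*} [AddCommMonoid M] {N : ℕ} (g : Fin N → M) (f : ℕ → M)
    (h : ∀ j : Fin N, g j = f ↑j) : ∑ j, g j = ∑ j ∈ Finset.range N, f j := by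
  rw [← Fin.sum_univ_eq_sum_range]
  exact Finset.sum_congr rfl fun j _ => h j

/-- extension of a parity function on `Fin (n+1)` to `ℕ` -/
def extend (n : ℕ) (p : Fin (n + 1) → ZMod 2) : ℕ → ZMod 2 :=
  fun j => if h : j < n + 1 then p ⟨j, h⟩ else 0

lemma extend_lt {n : ℕ} (p : Fin (n + 1) → ZMod 2) {j : ℕ} (h : j < n + 1) :
    extend n p j = p ⟨j, h⟩ := dif_pos h

lemma extend_eq {n : ℕ} (p : Fin (n + 1) → ZMod 2) (j : Fin (n + 1)) :
    extend n p ↑j = p j := by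
  rw [extend_lt p j.2, Fin.eta]

lemma elt_update_smul {k V : Type*} [CommRing k] [AddCommGroup V] [Module k V]
    (m : ℕ) (w : Fin (m + 1) → V) (idx : Fin (m + 1)) (c : k) (x : V) :
    elt k m (Function.update w idx (c • x)) = c • elt k m (Function.update w idx x) := by
  unfold elt
  rw [MultilinearMap.map_update_smul, LinearMap.map_smul]

lemma key_exponent (n K i : ℕ) (hK : 1 ≤ K) (hKn : K ≤ n + 1) (hi : i ≤ n + 1 - K)
    (p : ℕ → ZMod 2) (qd : ZMod 2) :
    (∑ j ∈ Finset.range (n+1), ((n - j : ℕ) : ZMod 2) * p j)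
      + (∑ j ∈ Finset.range (n+1), if j < i then p j + 1 else 0) * qd
    = ((n + 1 - K : ℕ) : ZMod 2) * (qd + ((K - 1 : ℕ) : ZMod 2))
      + (∑ j ∈ Finset.range (n+1), if j < i then p j else 0) * (qd + ((K - 1 : ℕ) : ZMod 2))
      + ((i * (K - 1) : ℕ) : ZMod 2)
      + (∑ j ∈ Finset.range (n + 1 - K + 1), ((n + 1 - K - j : ℕ) : ZMod 2) *
          (if j < i then p j
           else if j = i then (∑ t ∈ Finset.range K, p (i + t)) + qd + ((K - 1 : ℕ) : ZMod 2)
           else p (j + K - 1)))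
      + (∑ t ∈ Finset.range K, ((K - 1 - t : ℕ) : ZMod 2) * p (i + t)) := by
  set m := n + 1 - K with hm
  have hmK : m + K = n + 1 := by omega
  set X : ZMod 2 := ∑ j ∈ Finset.range i, ((m - j : ℕ) : ZMod 2) * p j with hX
  set S1 : ZMod 2 := ∑ j ∈ Finset.range i, p j with hS1
  set S2 : ZMod 2 := ∑ t ∈ Finset.range K, p (i + t) with hS2
  set Z : ZMod 2 := ∑ t ∈ Finset.range K, ((K - 1 - t : ℕ) : ZMod 2) * p (i + t) with hZ
  set Y : ZMod 2 := ∑ t ∈ Finset.range (m - i), ((m - i - 1 - t : ℕ) : ZMod 2) * p (i + K + t) with hY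
  have htwo : (2 : ZMod 2) = 0 := by decide
  have ha : (∑ j ∈ Finset.range (n+1), ((n - j : ℕ) : ZMod 2) * p j)
      = X + ((K - 1 : ℕ) : ZMod 2) * S1 + (((m - i : ℕ) : ZMod 2) * S2 + Z) + Y := by
    rw [← Finset.sum_range_add_sum_Ico _ (show i ≤ n + 1 by omega),
      ← Finset.sum_Ico_consecutive _ (show i ≤ i + K by omega) (show i + K ≤ n + 1 by omega),
      Finset.sum_Ico_eq_sum_range, Finset.sum_Ico_eq_sum_range]
    have e1 : ∑ j ∈ Finset.range i, ((n - j : ℕ) : ZMod 2) * p j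
        = X + ((K - 1 : ℕ) : ZMod 2) * S1 := by
      rw [hX, hS1, Finset.mul_sum, ← Finset.sum_add_distrib]
      refine Finset.sum_congr rfl fun j hj => ?_
      have hj' := Finset.mem_range.1 hj
      have : n - j = (m - j) + (K - 1) := by omega
      rw [this, Nat.cast_add, add_mul]
    have e2 : ∑ t ∈ Finset.range (i + K - i), ((n - (i + t) : ℕ) : ZMod 2) * p (i + t)
        = ((m - i : ℕ) : ZMod 2) * S2 + Z := by
      have h3 : i + K - i = K := by omega
      rw [h3, hS2, hZ, Finset.mul_sum, ← Finset.sum_add_distrib]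
      refine Finset.sum_congr rfl fun t ht => ?_
      have ht' := Finset.mem_range.1 ht
      have : n - (i + t) = (m - i) + (K - 1 - t) := by omega
      rw [this, Nat.cast_add, add_mul]
    have e3 : ∑ t ∈ Finset.range (n + 1 - (i + K)), ((n - (i + K + t) : ℕ) : ZMod 2) * p (i + K + t)
        = Y := by
      have h4 : n + 1 - (i + K) = m - i := by omega
      rw [h4, hY]
      refine Finset.sum_congr rfl fun t ht => ?_
      have ht' := Finset.mem_range.1 ht
      have : n - (i + K + t) = m - i - 1 - t := by omega
      rw [this]
    rw [e1, e2, e3]; ring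
  have hb : (∑ j ∈ Finset.range (n+1), if j < i then p j + 1 else 0) = S1 + (i : ZMod 2) := by
    rw [sum_if_lt (by omega), Finset.sum_add_distrib, hS1, Finset.sum_const, Finset.card_range,
      nsmul_eq_mul, mul_one]
  have hc : (∑ j ∈ Finset.range (n+1), if j < i then p j else 0) = S1 := by
    rw [sum_if_lt (by omega)]
  have hd : (∑ j ∈ Finset.range (m + 1), ((m - j : ℕ) : ZMod 2) *
          (if j < i then p j
           else if j = i then S2 + qd + ((K - 1 : ℕ) : ZMod 2)
           else p (j + K - 1)))
      = X + ((m - i : ℕ) : ZMod 2) * (S2 + qd + ((K - 1 : ℕ) : ZMod 2)) + Y := by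
    rw [← Finset.sum_range_add_sum_Ico _ (show i ≤ m + 1 by omega),
      Finset.sum_eq_sum_Ico_succ_bot (show i < m + 1 by omega)]
    have e1 : ∑ j ∈ Finset.range i, ((m - j : ℕ) : ZMod 2) *
          (if j < i then p j else if j = i then S2 + qd + ((K - 1 : ℕ) : ZMod 2) else p (j + K - 1))
        = X := by
      refine Finset.sum_congr rfl fun j hj => ?_
      rw [if_pos (Finset.mem_range.1 hj)]
    have e2 : ((m - i : ℕ) : ZMod 2) *
          (if i < i then p i else if i = i then S2 + qd + ((K - 1 : ℕ) : ZMod 2) else p (i + K - 1))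
        = ((m - i : ℕ) : ZMod 2) * (S2 + qd + ((K - 1 : ℕ) : ZMod 2)) := by
      rw [if_neg (lt_irrefl i), if_pos rfl]
    have e3 : ∑ j ∈ Finset.Ico (i + 1) (m + 1), ((m - j : ℕ) : ZMod 2) *
          (if j < i then p j else if j = i then S2 + qd + ((K - 1 : ℕ) : ZMod 2) else p (j + K - 1))
        = Y := by
      rw [Finset.sum_Ico_eq_sum_range, hY]
      have h4 : m + 1 - (i + 1) = m - i := by omega
      rw [h4]
      refine Finset.sum_congr rfl fun t ht => ?_
      have ht' := Finset.mem_range.1 ht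
      rw [if_neg (by omega), if_neg (by omega)]
      have e5 : m - (i + 1 + t) = m - i - 1 - t := by omega
      have e6 : i + 1 + t + K - 1 = i + K + t := by omega
      rw [e5, e6]
    rw [e1, e2, e3]; ring
  rw [ha, hb, hc, hd]
  have c1 : ((m - i : ℕ) : ZMod 2) = (m : ZMod 2) - (i : ZMod 2) := by
    rw [Nat.cast_sub hi]
  have c2 : ((K - 1 : ℕ) : ZMod 2) = (K : ZMod 2) - 1 := by
    rw [Nat.cast_sub hK, Nat.cast_one]
  have c3 : ((i * (K - 1) : ℕ) : ZMod 2) = (i : ZMod 2) * ((K : ZMod 2) - 1) := by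
    rw [Nat.cast_mul, c2]
  rw [c1, c2, c3]
  linear_combination ((i : ZMod 2) * qd - (m : ZMod 2) * (qd + (K : ZMod 2) - 1)) * htwo

/-- let `W = ΠV` (identified with `V` as a module; the `W`-parity of a
`V`-homogeneous element of parity `s` is `s + 1`), `η : T(V) → T(W)` the standard
isomorphism, `δ_K : W^{⊗K} → W` homogeneous of `W`-parity `qd`,
`μ_K = η₁⁻¹ ∘ δ_K ∘ η_K`, `D = δ̂_K` the `ZMod 2`-coderivation extension of `δ_K`
on `T(W)` and `M = μ̂_K` the `ZMod 2 × ℤ`-coderivation extension of `μ_K` on `T(V)`.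
Then `|μ_K| = |δ_K| + (K-1)` and, on `v₁⊗⋯⊗v_n`,
`δ̂_K ∘ η = (-1)^{(n-K)|μ_K|} η ∘ μ̂_K` (i.e. `η⁻¹∘δ̂_K∘η = (-1)^{(n-K)|μ_K|} μ̂_K`). -/
theorem conjugated_coderivation_sign {k V : Type*} [Field k] [AddCommGroup V] [Module k V]
    (𝒱 : ZMod 2 → Submodule k V) [DirectSum.Decomposition 𝒱]
    (η : TCoalg k V →ₗ[k] TCoalg k V)
    (hη : ∀ (n : ℕ) (v : Fin (n + 1) → V) (p : Fin (n + 1) → ZMod 2),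
      (∀ i, v i ∈ 𝒱 (p i)) →
      η (elt k n v)
        = pSign k (∑ i : Fin (n + 1), ((n - (i : ℕ) : ℕ) : ZMod 2) * p i) • elt k n v)
    (K : ℕ) (hK : 1 ≤ K)
    (δk : (⨂[k] (_ : Fin K), V) →ₗ[k] V) (qd : ZMod 2)
    (hδk : ∀ (u : Fin K → V) (q : Fin K → ZMod 2), (∀ i, u i ∈ 𝒱 (q i)) →
      δk (PiTensorProduct.tprod k u) ∈ 𝒱 ((∑ i, (q i + 1)) + qd + 1))
    (μk : (⨂[k] (_ : Fin K), V) →ₗ[k] V)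
    (hμk : ∀ (u : Fin K → V) (q : Fin K → ZMod 2), (∀ i, u i ∈ 𝒱 (q i)) →
      μk (PiTensorProduct.tprod k u)
        = pSign k (∑ i : Fin K, ((K - 1 - (i : ℕ) : ℕ) : ZMod 2) * q i) •
            δk (PiTensorProduct.tprod k u))
    (D : TCoalg k V →ₗ[k] TCoalg k V)
    (hD0 : ∀ (n : ℕ), n + 1 < K → ∀ v : Fin (n + 1) → V, D (elt k n v) = 0)
    (hD : ∀ (n : ℕ) (hn : K ≤ n + 1) (v : Fin (n + 1) → V) (p : Fin (n + 1) → ZMod 2),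
      (∀ i, v i ∈ 𝒱 (p i)) →
      D (elt k n v) = ∑ i : Fin (n + 2 - K),
        pSign k ((∑ j : Fin (n + 1), if (j : ℕ) < (i : ℕ) then p j + 1 else 0) * qd) •
          elt k (n + 1 - K) (fun j : Fin (n + 1 - K + 1) =>
            if h1 : (j : ℕ) < (i : ℕ) then
              v ⟨(j : ℕ), by have := j.2; have := i.2; omega⟩
            else if h2 : (j : ℕ) = (i : ℕ) then
              δk (PiTensorProduct.tprod k (fun t : Fin K =>
                v ⟨(i : ℕ) + (t : ℕ), by have := t.2; have := i.2; omega⟩))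
            else v ⟨(j : ℕ) + K - 1, by have := j.2; omega⟩))
    (M : TCoalg k V →ₗ[k] TCoalg k V)
    (hM0 : ∀ (n : ℕ), n + 1 < K → ∀ v : Fin (n + 1) → V, M (elt k n v) = 0)
    (hM : ∀ (n : ℕ) (hn : K ≤ n + 1) (v : Fin (n + 1) → V) (p : Fin (n + 1) → ZMod 2),
      (∀ i, v i ∈ 𝒱 (p i)) →
      M (elt k n v) = ∑ i : Fin (n + 2 - K),
        pSign k ((∑ j : Fin (n + 1), if (j : ℕ) < (i : ℕ) then p j else 0) *
            (qd + ((K - 1 : ℕ) : ZMod 2)) + (((i : ℕ) * (K - 1) : ℕ) : ZMod 2)) •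
          elt k (n + 1 - K) (fun j : Fin (n + 1 - K + 1) =>
            if h1 : (j : ℕ) < (i : ℕ) then
              v ⟨(j : ℕ), by have := j.2; have := i.2; omega⟩
            else if h2 : (j : ℕ) = (i : ℕ) then
              μk (PiTensorProduct.tprod k (fun t : Fin K =>
                v ⟨(i : ℕ) + (t : ℕ), by have := t.2; have := i.2; omega⟩))
            else v ⟨(j : ℕ) + K - 1, by have := j.2; omega⟩)) :
    (∀ (u : Fin K → V) (q : Fin K → ZMod 2), (∀ i, u i ∈ 𝒱 (q i)) →
      μk (PiTensorProduct.tprod k u) ∈ 𝒱 ((∑ i, q i) + (qd + ((K - 1 : ℕ) : ZMod 2)))) ∧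
    (∀ (n : ℕ) (v : Fin (n + 1) → V) (p : Fin (n + 1) → ZMod 2),
      (∀ i, v i ∈ 𝒱 (p i)) →
      D (η (elt k n v))
        = pSign k (((n + 1 - K : ℕ) : ZMod 2) * (qd + ((K - 1 : ℕ) : ZMod 2))) •
            η (M (elt k n v))) := by
  have htwo : (2 : ZMod 2) = 0 := by decide
  have part1 : ∀ (u : Fin K → V) (q : Fin K → ZMod 2), (∀ i, u i ∈ 𝒱 (q i)) →
      μk (PiTensorProduct.tprod k u) ∈ 𝒱 ((∑ i, q i) + (qd + ((K - 1 : ℕ) : ZMod 2))) := by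
    intro u q hq
    rw [hμk u q hq]
    refine Submodule.smul_mem _ _ ?_
    have h := hδk u q hq
    have e : (∑ i, (q i + 1)) + qd + 1 = (∑ i, q i) + (qd + ((K - 1 : ℕ) : ZMod 2)) := by
      have c2 : ((K - 1 : ℕ) : ZMod 2) = (K : ZMod 2) - 1 := by
        rw [Nat.cast_sub hK, Nat.cast_one]
      rw [Finset.sum_add_distrib, Finset.sum_const, Finset.card_univ, Fintype.card_fin,
        nsmul_eq_mul, mul_one, c2]
      linear_combination htwo
    rw [e] at h
    exact h
  refine ⟨part1, ?_⟩
  intro n v p hp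
  rcases Nat.lt_or_ge (n + 1) K with hsmall | hn
  · rw [hη n v p hp, LinearMap.map_smul, hD0 n hsmall, smul_zero, hM0 n hsmall, map_zero,
      smul_zero]
  · rw [hη n v p hp, LinearMap.map_smul, hD n hn v p hp, hM n hn v p hp, map_sum,
      Finset.smul_sum, Finset.smul_sum]
    refine Finset.sum_congr rfl fun i _ => ?_
    have hi' : (i : ℕ) ≤ n + 1 - K := by have := i.2; omega
    -- membership data for the μ-vector
    have hmem : ∀ j : Fin (n + 1 - K + 1),
        (fun j : Fin (n + 1 - K + 1) =>
            if h1 : (j : ℕ) < (i : ℕ) then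
              v ⟨(j : ℕ), by have := j.2; have := i.2; omega⟩
            else if h2 : (j : ℕ) = (i : ℕ) then
              μk (PiTensorProduct.tprod k (fun t : Fin K =>
                v ⟨(i : ℕ) + (t : ℕ), by have := t.2; have := i.2; omega⟩))
            else v ⟨(j : ℕ) + K - 1, by have := j.2; omega⟩) j
          ∈ 𝒱 ((fun j : Fin (n + 1 - K + 1) =>
            if (j : ℕ) < (i : ℕ) then extend n p j
            else if (j : ℕ) = (i : ℕ) then
              (∑ t ∈ Finset.range K, extend n p ((i : ℕ) + t)) + qd + ((K - 1 : ℕ) : ZMod 2)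
            else extend n p ((j : ℕ) + K - 1)) j) := by
      intro j
      dsimp only
      split_ifs with h1 h2
      · rw [extend_lt p (show (j : ℕ) < n + 1 by have := j.2; omega)]
        exact hp _
      · have hq : ∀ t : Fin K, v ⟨(i : ℕ) + (t : ℕ), by have := t.2; have := i.2; omega⟩
            ∈ 𝒱 ((fun t : Fin K => extend n p ((i : ℕ) + (t : ℕ))) t) := by
          intro t
          dsimp only
          rw [extend_lt p (show (i : ℕ) + (t : ℕ) < n + 1 by have := t.2; omega)]
          exact hp _
        have h := part1 _ _ hq
        have e : (∑ t : Fin K, (fun t : Fin K => extend n p ((i : ℕ) + (t : ℕ))) t)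
              + (qd + ((K - 1 : ℕ) : ZMod 2))
            = (∑ t ∈ Finset.range K, extend n p ((i : ℕ) + t)) + qd + ((K - 1 : ℕ) : ZMod 2) := by
          rw [Fin.sum_univ_eq_sum_range (fun t => extend n p ((i : ℕ) + t)) K]
          ring
        rw [e] at h
        exact h
      · rw [extend_lt p (show (j : ℕ) + K - 1 < n + 1 by have := j.2; omega)]
        exact hp _
    rw [LinearMap.map_smul, hη (n + 1 - K)
      (fun j : Fin (n + 1 - K + 1) =>
            if h1 : (j : ℕ) < (i : ℕ) then
              v ⟨(j : ℕ), by have := j.2; have := i.2; omega⟩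
            else if h2 : (j : ℕ) = (i : ℕ) then
              μk (PiTensorProduct.tprod k (fun t : Fin K =>
                v ⟨(i : ℕ) + (t : ℕ), by have := t.2; have := i.2; omega⟩))
            else v ⟨(j : ℕ) + K - 1, by have := j.2; omega⟩)
      (fun j : Fin (n + 1 - K + 1) =>
            if (j : ℕ) < (i : ℕ) then extend n p j
            else if (j : ℕ) = (i : ℕ) then
              (∑ t ∈ Finset.range K, extend n p ((i : ℕ) + t)) + qd + ((K - 1 : ℕ) : ZMod 2)
            else extend n p ((j : ℕ) + K - 1)) hmem]
    -- swap μ for δ in the elt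
    have hswap : elt k (n + 1 - K)
        (fun j : Fin (n + 1 - K + 1) =>
            if h1 : (j : ℕ) < (i : ℕ) then
              v ⟨(j : ℕ), by have := j.2; have := i.2; omega⟩
            else if h2 : (j : ℕ) = (i : ℕ) then
              μk (PiTensorProduct.tprod k (fun t : Fin K =>
                v ⟨(i : ℕ) + (t : ℕ), by have := t.2; have := i.2; omega⟩))
            else v ⟨(j : ℕ) + K - 1, by have := j.2; omega⟩)
        = pSign k (∑ t : Fin K, ((K - 1 - (t : ℕ) : ℕ) : ZMod 2) * extend n p ((i : ℕ) + (t : ℕ))) •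
          elt k (n + 1 - K)
        (fun j : Fin (n + 1 - K + 1) =>
            if h1 : (j : ℕ) < (i : ℕ) then
              v ⟨(j : ℕ), by have := j.2; have := i.2; omega⟩
            else if h2 : (j : ℕ) = (i : ℕ) then
              δk (PiTensorProduct.tprod k (fun t : Fin K =>
                v ⟨(i : ℕ) + (t : ℕ), by have := t.2; have := i.2; omega⟩))
            else v ⟨(j : ℕ) + K - 1, by have := j.2; omega⟩) := by
      set wD : Fin (n + 1 - K + 1) → V := (fun j : Fin (n + 1 - K + 1) =>
            if h1 : (j : ℕ) < (i : ℕ) then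
              v ⟨(j : ℕ), by have := j.2; have := i.2; omega⟩
            else if h2 : (j : ℕ) = (i : ℕ) then
              δk (PiTensorProduct.tprod k (fun t : Fin K =>
                v ⟨(i : ℕ) + (t : ℕ), by have := t.2; have := i.2; omega⟩))
            else v ⟨(j : ℕ) + K - 1, by have := j.2; omega⟩) with hwD
      set c : k := pSign k (∑ t : Fin K,
        ((K - 1 - (t : ℕ) : ℕ) : ZMod 2) * extend n p ((i : ℕ) + (t : ℕ))) with hc
      set x : V := δk (PiTensorProduct.tprod k (fun t : Fin K =>
                v ⟨(i : ℕ) + (t : ℕ), by have := t.2; have := i.2; omega⟩)) with hx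
      have hidx : (i : ℕ) < n + 1 - K + 1 := by omega
      have hμval : μk (PiTensorProduct.tprod k (fun t : Fin K =>
            v ⟨(i : ℕ) + (t : ℕ), by have := t.2; have := i.2; omega⟩)) = c • x := by
        rw [hμk _ (fun t : Fin K => extend n p ((i : ℕ) + (t : ℕ)))
          (by intro t
              rw [extend_lt p (show (i : ℕ) + (t : ℕ) < n + 1 by have := t.2; omega)]
              exact hp _)]
      have h1 : (fun j : Fin (n + 1 - K + 1) =>
            if h1 : (j : ℕ) < (i : ℕ) then
              v ⟨(j : ℕ), by have := j.2; have := i.2; omega⟩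
            else if h2 : (j : ℕ) = (i : ℕ) then
              μk (PiTensorProduct.tprod k (fun t : Fin K =>
                v ⟨(i : ℕ) + (t : ℕ), by have := t.2; have := i.2; omega⟩))
            else v ⟨(j : ℕ) + K - 1, by have := j.2; omega⟩)
          = Function.update wD ⟨(i : ℕ), hidx⟩ (c • x) := by
        funext j
        rcases lt_trichotomy (j : ℕ) (i : ℕ) with h | h | h
        · rw [Function.update_of_ne (by
            intro he
            rw [he] at h
            exact lt_irrefl _ h)]
          rw [hwD]
          dsimp only
          rw [dif_pos h, dif_pos h]
        · have : j = ⟨(i : ℕ), hidx⟩ := Fin.ext h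
          rw [this, Function.update_self]
          dsimp only
          rw [dif_neg (lt_irrefl _), dif_pos rfl]
          exact hμval
        · rw [Function.update_of_ne (by
            intro he
            rw [he] at h
            exact lt_irrefl _ h)]
          rw [hwD]
          dsimp only
          rw [dif_neg (by omega), dif_neg (by omega), dif_neg (by omega), dif_neg (by omega)]
      have h2 : Function.update wD ⟨(i : ℕ), hidx⟩ x = wD := by
        funext j
        rcases eq_or_ne j ⟨(i : ℕ), hidx⟩ with h | h
        · rw [h, Function.update_self, hwD]
          dsimp only
          rw [dif_neg (lt_irrefl _), dif_pos rfl]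
        · rw [Function.update_of_ne h]
      rw [h1, elt_update_smul, h2, hc]
    rw [hswap]
    rw [smul_smul, smul_smul, smul_smul, smul_smul]
    congr 1
    simp only [← pSign_add]
    apply pSign_congr
    -- now a pure ZMod 2 identity; convert Fin sums to range sums
    have e1 : (∑ j : Fin (n + 1), ((n - (j : ℕ) : ℕ) : ZMod 2) * p j)
        = ∑ j ∈ Finset.range (n + 1), ((n - j : ℕ) : ZMod 2) * extend n p j :=
      fin_sum_ext _ _ fun j => by rw [extend_eq]
    have e2 : (∑ j : Fin (n + 1), if (j : ℕ) < (i : ℕ) then p j + 1 else 0)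
        = ∑ j ∈ Finset.range (n + 1), (if j < (i : ℕ) then extend n p j + 1 else 0) :=
      fin_sum_ext _ _ fun j => by
        by_cases h : (j : ℕ) < (i : ℕ) <;> simp [h, extend_eq]
    have e3 : (∑ j : Fin (n + 1), if (j : ℕ) < (i : ℕ) then p j else 0)
        = ∑ j ∈ Finset.range (n + 1), (if j < (i : ℕ) then extend n p j else 0) :=
      fin_sum_ext _ _ fun j => by
        by_cases h : (j : ℕ) < (i : ℕ) <;> simp [h, extend_eq]
    have e4 : (∑ j : Fin (n + 1 - K + 1), ((n + 1 - K - (j : ℕ) : ℕ) : ZMod 2) *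
          (if (j : ℕ) < (i : ℕ) then extend n p j
           else if (j : ℕ) = (i : ℕ) then
             (∑ t ∈ Finset.range K, extend n p ((i : ℕ) + t)) + qd + ((K - 1 : ℕ) : ZMod 2)
           else extend n p ((j : ℕ) + K - 1)))
        = ∑ j ∈ Finset.range (n + 1 - K + 1), ((n + 1 - K - j : ℕ) : ZMod 2) *
          (if j < (i : ℕ) then extend n p j
           else if j = (i : ℕ) then
             (∑ t ∈ Finset.range K, extend n p ((i : ℕ) + t)) + qd + ((K - 1 : ℕ) : ZMod 2)
           else extend n p (j + K - 1)) :=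
      fin_sum_ext _ _ fun j => rfl
    have e5 : (∑ t : Fin K, ((K - 1 - (t : ℕ) : ℕ) : ZMod 2) * extend n p ((i : ℕ) + (t : ℕ)))
        = ∑ t ∈ Finset.range K, ((K - 1 - t : ℕ) : ZMod 2) * extend n p ((i : ℕ) + t) :=
      fin_sum_ext _ _ fun t => rfl
    rw [e1, e2, e3, e4, e5]
    linear_combination key_exponent n K (i : ℕ) hK hn hi' (extend n p) qd
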